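/- arXiv:math/0601178 — 3 statements merged into one kernel-verified Lean document; each statement's English description precedes it below -/
import Mathlib

section
/- Let m : S^{n−1} → ℝ be a continuous even function with m ≥ 0, let ξ ∈ ℝⁿ, ξ ≠ 0, and let f be a symmetric n×n real matrix. Then the quantity ∫_{S^{n−1} ∩ ξ^⊥} m(θ) (θᵀ f θ)² dσ(θ) is nonnegative, and it is strictly positive whenever f ξ = 0, f ≠ 0, and m > 0 on a nonempty open subset of S^{n−1} ∩ ξ^⊥, provided n ≥ 3. -/
open MeasureTheory RealInnerProductSpace
open scoped Pointwise

section Aux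

variable {n : ℕ}

/-- The bilinear form associated to a matrix, on Euclidean space. -/
def Fbil (f : Matrix (Fin n) (Fin n) ℝ) (x y : EuclideanSpace ℝ (Fin n)) : ℝ :=
  ∑ i, ∑ j, f i j * x i * y j

lemma Fbil_add_left (f : Matrix (Fin n) (Fin n) ℝ) (x x' y : EuclideanSpace ℝ (Fin n)) :
    Fbil f (x + x') y = Fbil f x y + Fbil f x' y := by
  unfold Fbil
  rw [← Finset.sum_add_distrib]
  refine Finset.sum_congr rfl fun i _ => ?_
  rw [← Finset.sum_add_distrib]
  refine Finset.sum_congr rfl fun j _ => ?_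
  rw [PiLp.add_apply]; ring

lemma Fbil_add_right (f : Matrix (Fin n) (Fin n) ℝ) (x y y' : EuclideanSpace ℝ (Fin n)) :
    Fbil f x (y + y') = Fbil f x y + Fbil f x y' := by
  unfold Fbil
  rw [← Finset.sum_add_distrib]
  refine Finset.sum_congr rfl fun i _ => ?_
  rw [← Finset.sum_add_distrib]
  refine Finset.sum_congr rfl fun j _ => ?_
  rw [PiLp.add_apply]; ring

lemma Fbil_smul_left (f : Matrix (Fin n) (Fin n) ℝ) (c : ℝ) (x y : EuclideanSpace ℝ (Fin n)) :
    Fbil f (c • x) y = c * Fbil f x y := by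
  unfold Fbil
  rw [Finset.mul_sum]
  refine Finset.sum_congr rfl fun i _ => ?_
  rw [Finset.mul_sum]
  refine Finset.sum_congr rfl fun j _ => ?_
  rw [PiLp.smul_apply, smul_eq_mul]; ring

lemma Fbil_smul_right (f : Matrix (Fin n) (Fin n) ℝ) (c : ℝ) (x y : EuclideanSpace ℝ (Fin n)) :
    Fbil f x (c • y) = c * Fbil f x y := by
  unfold Fbil
  rw [Finset.mul_sum]
  refine Finset.sum_congr rfl fun i _ => ?_
  rw [Finset.mul_sum]
  refine Finset.sum_congr rfl fun j _ => ?_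
  rw [PiLp.smul_apply, smul_eq_mul]; ring

lemma Fbil_neg_left (f : Matrix (Fin n) (Fin n) ℝ) (x y : EuclideanSpace ℝ (Fin n)) :
    Fbil f (-x) y = -Fbil f x y := by
  have := Fbil_smul_left f (-1) x y
  simpa using this

lemma Fbil_symm {f : Matrix (Fin n) (Fin n) ℝ} (hf : f.IsSymm) (x y : EuclideanSpace ℝ (Fin n)) :
    Fbil f x y = Fbil f y x := by
  unfold Fbil
  rw [Finset.sum_comm]
  refine Finset.sum_congr rfl fun j _ => Finset.sum_congr rfl fun i _ => ?_
  rw [hf.apply i j]; ring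

lemma Fbil_single (f : Matrix (Fin n) (Fin n) ℝ) (a b : Fin n) :
    Fbil f (EuclideanSpace.single a 1) (EuclideanSpace.single b 1) = f a b := by
  unfold Fbil
  simp [EuclideanSpace.single_apply, Finset.sum_ite_eq', mul_ite, ite_mul]

lemma Fbil_right_orth {f : Matrix (Fin n) (Fin n) ℝ} {ξ : EuclideanSpace ℝ (Fin n)}
    (hfξ : ∀ i, ∑ j, f i j * ξ j = 0) (x : EuclideanSpace ℝ (Fin n)) :
    Fbil f x ξ = 0 := by
  unfold Fbil
  rw [Finset.sum_eq_zero]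
  intro i _
  have : ∑ j, f i j * x i * ξ j = x i * ∑ j, f i j * ξ j := by
    rw [Finset.mul_sum]; exact Finset.sum_congr rfl fun j _ => by ring
  rw [this, hfξ i, mul_zero]

/-- The surface measure `volume.toSphere` is positive on nonempty open subsets of the sphere. -/
lemma toSphere_pos_of_isOpen (k : ℕ) (hk : 1 ≤ k)
    (s : Set (Metric.sphere (0 : EuclideanSpace ℝ (Fin k)) 1))
    (hso : IsOpen s) (hsne : s.Nonempty) :
    0 < (volume : Measure (EuclideanSpace ℝ (Fin k))).toSphere s := by
  rw [Measure.toSphere_apply' _ hso.measurableSet]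
  obtain ⟨W, hW, hsW⟩ := isOpen_induced_iff.mp hso
  set U : Set (EuclideanSpace ℝ (Fin k)) :=
    {y | ‖y‖ < 1} ∩ ({y | y ≠ 0} ∩ (fun y => ‖y‖⁻¹ • y) ⁻¹' W) with hU
  have hUopen : IsOpen U := by
    have h1 : IsOpen {y : EuclideanSpace ℝ (Fin k) | y ≠ 0} := isOpen_compl_singleton
    have h2 : ContinuousOn (fun y : EuclideanSpace ℝ (Fin k) => ‖y‖⁻¹ • y)
        {y : EuclideanSpace ℝ (Fin k) | y ≠ 0} :=
      ContinuousOn.smul (continuous_norm.continuousOn.inv₀ fun y hy =>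
        norm_ne_zero_iff.mpr hy) continuousOn_id
    exact (isOpen_lt continuous_norm continuous_const).inter
      (h2.isOpen_inter_preimage h1 hW)
  have hUne : U.Nonempty := by
    obtain ⟨θ₀, hθ₀⟩ := hsne
    have hx₀ : ‖(θ₀ : EuclideanSpace ℝ (Fin k))‖ = 1 :=
      mem_sphere_zero_iff_norm.mp θ₀.2
    refine ⟨(2⁻¹ : ℝ) • (θ₀ : EuclideanSpace ℝ (Fin k)), ?_, ?_, ?_⟩
    · show ‖(2⁻¹ : ℝ) • (θ₀ : EuclideanSpace ℝ (Fin k))‖ < 1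
      rw [norm_smul, hx₀]; norm_num
    · show (2⁻¹ : ℝ) • (θ₀ : EuclideanSpace ℝ (Fin k)) ≠ 0
      simp only [ne_eq, smul_eq_zero, not_or]
      refine ⟨by norm_num, fun h => ?_⟩
      rw [h, norm_zero] at hx₀; norm_num at hx₀
    · show ‖(2⁻¹ : ℝ) • (θ₀ : EuclideanSpace ℝ (Fin k))‖⁻¹ •
        ((2⁻¹ : ℝ) • (θ₀ : EuclideanSpace ℝ (Fin k))) ∈ W
      rw [norm_smul, hx₀]
      norm_num [smul_smul]
      rw [← hsW] at hθ₀; exact hθ₀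
  have hsub : U ⊆ Set.Ioo (0 : ℝ) 1 • (Subtype.val '' s) := by
    rintro y ⟨hy1, hy0, hyW⟩
    have hy0' : y ≠ 0 := hy0
    have hny : ‖y‖ ≠ 0 := norm_ne_zero_iff.mpr hy0'
    have hmem : ‖y‖⁻¹ • y ∈ Metric.sphere (0 : EuclideanSpace ℝ (Fin k)) 1 := by
      rw [mem_sphere_zero_iff_norm, norm_smul, norm_inv, norm_norm, inv_mul_cancel₀ hny]
    refine Set.mem_smul.mpr ⟨‖y‖, ?_, ‖y‖⁻¹ • y, ⟨⟨‖y‖⁻¹ • y, hmem⟩, ?_, rfl⟩, ?_⟩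
    · exact ⟨norm_pos_iff.mpr hy0', hy1⟩
    · rw [← hsW]; exact hyW
    · rw [smul_smul, mul_inv_cancel₀ hny, one_smul]
  have hvol : 0 < volume U := hUopen.measure_pos volume hUne
  have hdim : (Module.finrank ℝ (EuclideanSpace ℝ (Fin k)) : ENNReal) ≠ 0 := by
    rw [finrank_euclideanSpace_fin]
    exact_mod_cast Nat.one_le_iff_ne_zero.mp hk
  exact ENNReal.mul_pos hdim (hvol.trans_le (measure_mono hsub)).ne'

end Aux

theorem stmt17 (n : ℕ) (hn : 3 ≤ n)
    (m : EuclideanSpace ℝ (Fin n) → ℝ) (hm : Continuous m)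
    (heven : ∀ θ, m (-θ) = m θ) (hpos : ∀ θ, 0 ≤ m θ)
    (ξ : EuclideanSpace ℝ (Fin n)) (hξ : ξ ≠ 0)
    (f : Matrix (Fin n) (Fin n) ℝ) (hf : f.IsSymm)
    -- `φ` is an isometric parametrization of the hyperplane `ξ^⊥`,
    -- so that `θ ↦ φ θ` identifies the unit sphere of `ξ^⊥` with `S^{n-2}`,
    -- carrying its surface measure `volume.toSphere`.
    (φ : EuclideanSpace ℝ (Fin (n - 1)) →ₗᵢ[ℝ] EuclideanSpace ℝ (Fin n))
    (hφ : Set.range φ = {y : EuclideanSpace ℝ (Fin n) | ⟪y, ξ⟫ = 0}) :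
    0 ≤ ∫ θ : Metric.sphere (0 : EuclideanSpace ℝ (Fin (n - 1))) 1,
          m (φ θ) * (∑ i, ∑ j, f i j * (φ (θ : EuclideanSpace ℝ (Fin (n - 1)))) i
              * (φ (θ : EuclideanSpace ℝ (Fin (n - 1)))) j) ^ 2
          ∂((volume : Measure (EuclideanSpace ℝ (Fin (n - 1)))).toSphere) ∧
    ((∀ i, ∑ j, f i j * ξ j = 0) → f ≠ 0 →
      (∃ V : Set (Metric.sphere (0 : EuclideanSpace ℝ (Fin (n - 1))) 1),
        IsOpen V ∧ V.Nonempty ∧ ∀ θ ∈ V, 0 < m (φ θ)) →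
      0 < ∫ θ : Metric.sphere (0 : EuclideanSpace ℝ (Fin (n - 1))) 1,
          m (φ θ) * (∑ i, ∑ j, f i j * (φ (θ : EuclideanSpace ℝ (Fin (n - 1)))) i
              * (φ (θ : EuclideanSpace ℝ (Fin (n - 1)))) j) ^ 2
          ∂((volume : Measure (EuclideanSpace ℝ (Fin (n - 1)))).toSphere)) := by
  classical
  set μ := (volume : Measure (EuclideanSpace ℝ (Fin (n - 1)))).toSphere with hμ
  -- the integrand
  set g : Metric.sphere (0 : (EuclideanSpace ℝ (Fin (n - 1)))) 1 → ℝ :=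
    fun θ => m (φ θ) * (∑ i, ∑ j, f i j * (φ (θ : (EuclideanSpace ℝ (Fin (n - 1))))) i * (φ (θ : (EuclideanSpace ℝ (Fin (n - 1))))) j) ^ 2 with hg
  have hQF : ∀ y : EuclideanSpace ℝ (Fin n),
      (∑ i, ∑ j, f i j * y i * y j) = Fbil f y y := fun y => rfl
  have hg0 : ∀ θ, 0 ≤ g θ := fun θ => mul_nonneg (hpos _) (sq_nonneg _)
  refine ⟨integral_nonneg hg0, ?_⟩
  intro hfξ hf0 ⟨V, hVo, hVne, hVm⟩
  -- continuity of g
  have hQc : Continuous fun y : EuclideanSpace ℝ (Fin n) => Fbil f y y := by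
    unfold Fbil
    refine continuous_finset_sum _ fun i _ => continuous_finset_sum _ fun j _ => ?_
    exact (continuous_const.mul (EuclideanSpace.proj i).continuous).mul
      (EuclideanSpace.proj j).continuous
  have hgc : Continuous g := by
    rw [hg]
    have hφc : Continuous fun θ : Metric.sphere (0 : (EuclideanSpace ℝ (Fin (n - 1)))) 1 => φ (θ : (EuclideanSpace ℝ (Fin (n - 1)))) :=
      φ.continuous.comp continuous_subtype_val
    exact (hm.comp hφc).mul ((hQc.comp hφc).pow 2)
  -- Step 1: there is a point of V where the quadratic form does not vanish.
  have key : ∃ θ₁ ∈ V, Fbil f (φ (θ₁ : (EuclideanSpace ℝ (Fin (n - 1))))) (φ (θ₁ : (EuclideanSpace ℝ (Fin (n - 1))))) ≠ 0 := by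
    by_contra hcon
    push_neg at hcon
    -- the quadratic form q vanishes on V; we show it vanishes identically,
    -- then f = 0, a contradiction.
    set q : (EuclideanSpace ℝ (Fin (n - 1))) → ℝ := fun u => Fbil f (φ u) (φ u) with hq
    have hqhom : ∀ (c : ℝ) (u : (EuclideanSpace ℝ (Fin (n - 1)))), q (c • u) = c ^ 2 * q u := by
      intro c u
      show Fbil f (φ (c • u)) (φ (c • u)) = c ^ 2 * Fbil f (φ u) (φ u)
      rw [φ.map_smul, Fbil_smul_left, Fbil_smul_right]
      ring
    -- q vanishes on an open nonempty set
    obtain ⟨W, hW, hsW⟩ := isOpen_induced_iff.mp hVo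
    set U : Set (EuclideanSpace ℝ (Fin (n - 1))) := {y | y ≠ 0} ∩ (fun y => ‖y‖⁻¹ • y) ⁻¹' W with hUdef
    have hUopen : IsOpen U := by
      have h2 : ContinuousOn (fun y : (EuclideanSpace ℝ (Fin (n - 1))) => ‖y‖⁻¹ • y) {y : (EuclideanSpace ℝ (Fin (n - 1))) | y ≠ 0} :=
        ContinuousOn.smul (continuous_norm.continuousOn.inv₀ fun y hy =>
          norm_ne_zero_iff.mpr hy) continuousOn_id
      exact h2.isOpen_inter_preimage isOpen_compl_singleton hW
    have hUne : U.Nonempty := by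
      obtain ⟨θ₀, hθ₀⟩ := hVne
      have hx₀ : ‖(θ₀ : (EuclideanSpace ℝ (Fin (n - 1))))‖ = 1 := mem_sphere_zero_iff_norm.mp θ₀.2
      refine ⟨(θ₀ : (EuclideanSpace ℝ (Fin (n - 1)))), fun h => ?_, ?_⟩
      · rw [h, norm_zero] at hx₀; norm_num at hx₀
      · show ‖(θ₀ : (EuclideanSpace ℝ (Fin (n - 1))))‖⁻¹ • (θ₀ : (EuclideanSpace ℝ (Fin (n - 1)))) ∈ W
        rw [hx₀]; norm_num
        rw [← hsW] at hθ₀; exact hθ₀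
    have hqU : ∀ y ∈ U, q y = 0 := by
      rintro y ⟨hy0, hyW⟩
      have hy0' : (y : (EuclideanSpace ℝ (Fin (n - 1)))) ≠ 0 := hy0
      have hny : ‖y‖ ≠ 0 := norm_ne_zero_iff.mpr hy0'
      have hmem : ‖y‖⁻¹ • y ∈ Metric.sphere (0 : (EuclideanSpace ℝ (Fin (n - 1)))) 1 := by
        rw [mem_sphere_zero_iff_norm, norm_smul, norm_inv, norm_norm, inv_mul_cancel₀ hny]
      have hV' : (⟨‖y‖⁻¹ • y, hmem⟩ : Metric.sphere (0 : (EuclideanSpace ℝ (Fin (n - 1)))) 1) ∈ V := by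
        rw [← hsW]; exact hyW
      have hy : y = ‖y‖ • (‖y‖⁻¹ • y) := by
        rw [smul_smul, mul_inv_cancel₀ hny, one_smul]
      calc q y = q (‖y‖ • (‖y‖⁻¹ • y)) := by rw [← hy]
        _ = ‖y‖ ^ 2 * q (‖y‖⁻¹ • y) := hqhom _ _
        _ = 0 := by
              have h0 : Fbil f (φ (‖y‖⁻¹ • y)) (φ (‖y‖⁻¹ • y)) = 0 := hcon ⟨‖y‖⁻¹ • y, hmem⟩ hV'
              show ‖y‖ ^ 2 * Fbil f (φ (‖y‖⁻¹ • y)) (φ (‖y‖⁻¹ • y)) = 0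
              rw [h0, mul_zero]
    -- q vanishes everywhere
    have hqzero : ∀ v : (EuclideanSpace ℝ (Fin (n - 1))), q v = 0 := by
      obtain ⟨x₀, hx₀U⟩ := hUne
      obtain ⟨ε, hε, hball⟩ := Metric.isOpen_iff.mp hUopen x₀ hx₀U
      intro v
      set c : ℝ := ε / 2 / (‖v‖ + 1) with hc
      have hvpos : (0:ℝ) < ‖v‖ + 1 := by positivity
      have hcpos : 0 < c := by positivity
      have hw : ‖c • v‖ < ε := by
        rw [norm_smul, Real.norm_eq_abs, abs_of_pos hcpos, hc]
        calc ε / 2 / (‖v‖ + 1) * ‖v‖ < ε / 2 / (‖v‖ + 1) * (‖v‖ + 1) := by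
              apply mul_lt_mul_of_pos_left (by linarith) (by positivity)
          _ = ε / 2 := by field_simp
          _ < ε := by linarith
      have hplus : q (x₀ + c • v) = 0 := by
        apply hqU; apply hball
        rw [Metric.mem_ball, dist_eq_norm]
        simpa using hw
      have hminus : q (x₀ - c • v) = 0 := by
        apply hqU; apply hball
        rw [Metric.mem_ball, dist_eq_norm]
        simpa [norm_sub_rev] using hw
      have hx₀q : q x₀ = 0 := hqU x₀ hx₀U
      have hexp : q (x₀ + c • v) + q (x₀ - c • v) = 2 * q x₀ + 2 * q (c • v) := by
        rw [hq]
        have h1 : φ (x₀ + c • v) = φ x₀ + φ (c • v) := φ.map_add _ _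
        have h2 : φ (x₀ - c • v) = φ x₀ + (- φ (c • v)) := by
          rw [← φ.map_neg, ← φ.map_add, sub_eq_add_neg]
        simp only [h1, h2, Fbil_add_left, Fbil_add_right, Fbil_neg_left]
        have hnegr : ∀ a b, Fbil f a (-b) = -Fbil f a b := fun a b => by
          rw [Fbil_symm hf, Fbil_neg_left, Fbil_symm hf]
        simp only [hnegr]
        ring
      have hqcv : q (c • v) = 0 := by
        rw [hplus, hminus, hx₀q] at hexp; linarith
      have hcv := hqhom c v
      rw [hqcv] at hcv
      rcases mul_eq_zero.mp hcv.symm with h | h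
      · exact absurd h (pow_ne_zero _ hcpos.ne')
      · exact h
    -- polarization : Fbil vanishes on range φ × range φ
    have hpolar : ∀ u v : (EuclideanSpace ℝ (Fin (n - 1))), Fbil f (φ u) (φ v) = 0 := by
      intro u v
      have h : Fbil f (φ (u + v)) (φ (u + v)) = 0 := hqzero (u + v)
      rw [φ.map_add, Fbil_add_left, Fbil_add_right, Fbil_add_right] at h
      have hu : Fbil f (φ u) (φ u) = 0 := hqzero u
      have hv : Fbil f (φ v) (φ v) = 0 := hqzero v
      have hsym : Fbil f (φ v) (φ u) = Fbil f (φ u) (φ v) := Fbil_symm hf _ _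
      rw [hu, hv, hsym] at h
      linarith
    -- with f ξ = 0 and symmetry, f = 0
    apply hf0
    have hξξ : ⟪ξ, ξ⟫ ≠ 0 := inner_self_ne_zero.mpr hξ
    have hFzero : ∀ x y : EuclideanSpace ℝ (Fin n), Fbil f x y = 0 := by
      intro x y
      set cx : ℝ := ⟪x, ξ⟫ / ⟪ξ, ξ⟫ with hcx
      set cy : ℝ := ⟪y, ξ⟫ / ⟪ξ, ξ⟫ with hcy
      have hpx : ⟪x - cx • ξ, ξ⟫ = 0 := by
        rw [inner_sub_left, real_inner_smul_left, hcx, div_mul_cancel₀ _ hξξ, sub_self]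
      have hpy : ⟪y - cy • ξ, ξ⟫ = 0 := by
        rw [inner_sub_left, real_inner_smul_left, hcy, div_mul_cancel₀ _ hξξ, sub_self]
      obtain ⟨u, hu⟩ : x - cx • ξ ∈ Set.range φ := by rw [hφ]; exact hpx
      obtain ⟨v, hv⟩ : y - cy • ξ ∈ Set.range φ := by rw [hφ]; exact hpy
      have hxd : x = φ u + cx • ξ := by rw [hu]; abel
      have hyd : y = φ v + cy • ξ := by rw [hv]; abel
      have hFξ : ∀ z, Fbil f z ξ = 0 := Fbil_right_orth hfξ
      have hξF : ∀ z, Fbil f ξ z = 0 := fun z => by rw [Fbil_symm hf]; exact hFξ z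
      rw [hxd, hyd]
      simp [Fbil_add_left, Fbil_add_right, Fbil_smul_left, Fbil_smul_right,
        hpolar u v, hFξ, hξF]
    ext a b
    have := hFzero (EuclideanSpace.single a 1) (EuclideanSpace.single b 1)
    rw [Fbil_single] at this
    simp [this]
  -- Step 2: positivity of the integral
  obtain ⟨θ₁, hθ₁V, hθ₁Q⟩ := key
  have hgθ₁ : 0 < g θ₁ := by
    rw [hg]
    exact mul_pos (hVm θ₁ hθ₁V) (by positivity)
  have hgi : Integrable g μ :=
    hgc.integrable_of_hasCompactSupport (HasCompactSupport.of_compactSpace g)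
  rw [show (∫ θ : Metric.sphere (0 : (EuclideanSpace ℝ (Fin (n - 1)))) 1,
      m (φ θ) * (∑ i, ∑ j, f i j * (φ (θ : (EuclideanSpace ℝ (Fin (n - 1))))) i * (φ (θ : (EuclideanSpace ℝ (Fin (n - 1))))) j) ^ 2 ∂μ)
      = ∫ θ, g θ ∂μ from rfl]
  rw [integral_pos_iff_support_of_nonneg hg0 hgi]
  have hWo : IsOpen {θ : Metric.sphere (0 : (EuclideanSpace ℝ (Fin (n - 1)))) 1 | 0 < g θ} :=
    isOpen_lt continuous_const hgc
  have hWsub : {θ : Metric.sphere (0 : (EuclideanSpace ℝ (Fin (n - 1)))) 1 | 0 < g θ} ⊆ Function.support g :=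
    fun θ hθ => ne_of_gt hθ
  have hk : 1 ≤ n - 1 := by omega
  calc (0 : ENNReal) < μ {θ | 0 < g θ} :=
        toSphere_pos_of_isOpen (n - 1) hk _ hWo ⟨θ₁, hgθ₁⟩
    _ ≤ μ (Function.support g) := measure_mono hWsub
end

section
/- Let g be a continuous Riemannian metric on a compact manifold M with boundary and consider the solution v of the first-order linear ODE system along the x^n-coordinate: ∂ₙvₙ = f_{nn}, v|_{xⁿ=0} = 0, followed by ∂ₙvᵢ − 2Γ^α_{ni} v_α = 2f_{in} − ∂ᵢvₙ, vᵢ|_{xⁿ=0} = 0 (i = 1,…,n−1), in boundary normal coordinates where Γ^k_{nn} = Γ^n_{kn} = 0. If f and the Christoffel symbols Γ are continuous on [0, ε] in xⁿ (with parameters x'), then this system has a unique solution v on 0 ≤ xⁿ ≤ ε, and the tensor f − dv satisfies (f − dv)_{in} = 0 for all i. -/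
open Set

lemma stmt18_pl_step {E : Type*} [NormedAddCommGroup E] [NormedSpace ℝ E] [CompleteSpace E]
    {F : ℝ → E → E} {L B₀ : ℝ} (hL : 0 ≤ L) (hB₀ : 0 ≤ B₀)
    (hlip : ∀ t, LipschitzWith L.toNNReal (F t))
    (hcont : ∀ x, Continuous fun t => F t x)
    (hB : ∀ t, ‖F t 0‖ ≤ B₀)
    (t₀ : ℝ) (x₀ : E) (a b : ℝ) (ht₀ : t₀ ∈ Set.Icc a b)
    (hstep : max (b - t₀) (t₀ - a) ≤ 1 / (2 * (L + 1))) :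
    ∃ y : ℝ → E, y t₀ = x₀ ∧
      ∀ t ∈ Set.Icc a b, HasDerivWithinAt y (F t (y t)) (Set.Icc a b) t := by
  have hLcoe : (L.toNNReal : ℝ) = L := Real.coe_toNNReal L hL
  set R : ℝ := L * ‖x₀‖ + B₀ + 1 with hRdef
  have hR0 : 0 ≤ R := by positivity
  set C : ℝ := 2 * (L + 1) * R with hCdef
  have hC0 : 0 ≤ C := by positivity
  have hpl : IsPicardLindelof F (⟨t₀, ht₀⟩ : Icc a b) x₀ R.toNNReal 0 C.toNNReal L.toNNReal := by
    refine ⟨fun t _ => LipschitzWith.lipschitzOnWith (hlip t),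
      fun x _ => (hcont x).continuousOn, ?_, ?_⟩
    · intro t _ x hx
      rw [Real.coe_toNNReal _ hR0] at hx
      rw [Real.coe_toNNReal _ hC0]
      have h1 : ‖F t x - F t 0‖ ≤ L * ‖x‖ := by
        have := (hlip t).dist_le_mul x 0
        simpa [dist_eq_norm, hLcoe] using this
      have h2 : ‖x‖ ≤ ‖x₀‖ + R := by
        have hx' : ‖x - x₀‖ ≤ R := by
          simpa [dist_eq_norm] using (Metric.mem_closedBall.mp hx)
        calc ‖x‖ = ‖x - x₀ + x₀‖ := by rw [sub_add_cancel]
          _ ≤ ‖x - x₀‖ + ‖x₀‖ := norm_add_le _ _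
          _ ≤ ‖x₀‖ + R := by linarith
      calc ‖F t x‖ = ‖F t x - F t 0 + F t 0‖ := by rw [sub_add_cancel]
        _ ≤ ‖F t x - F t 0‖ + ‖F t 0‖ := norm_add_le _ _
        _ ≤ L * ‖x‖ + B₀ := add_le_add h1 (hB t)
        _ ≤ L * (‖x₀‖ + R) + B₀ := by nlinarith
        _ ≤ C := by nlinarith [norm_nonneg x₀, mul_nonneg hL (norm_nonneg x₀)]
    · show (C.toNNReal : ℝ) * max (b - t₀) (t₀ - a) ≤ (R.toNNReal : ℝ) - ((0 : NNReal) : ℝ)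
      rw [Real.coe_toNNReal _ hC0, Real.coe_toNNReal _ hR0, NNReal.coe_zero, sub_zero]
      have h2L : (2 * (L + 1)) ≠ 0 := by positivity
      calc C * max (b - t₀) (t₀ - a) ≤ C * (1 / (2 * (L + 1))) :=
            mul_le_mul_of_nonneg_left hstep hC0
        _ = R := by rw [hCdef]; field_simp
  exact hpl.exists_eq_forall_mem_Icc_hasDerivWithinAt₀

lemma stmt18_ode_global {E : Type*} [NormedAddCommGroup E] [NormedSpace ℝ E] [CompleteSpace E]
    {F : ℝ → E → E} {L B₀ : ℝ} (hL : 0 ≤ L) (hB₀ : 0 ≤ B₀)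
    (hlip : ∀ t, LipschitzWith L.toNNReal (F t))
    (hcont : ∀ x, Continuous fun t => F t x)
    (hB : ∀ t, ‖F t 0‖ ≤ B₀)
    (ε : ℝ) (hε : 0 < ε) :
    ∃ y : ℝ → E, y 0 = 0 ∧ ∀ t ∈ Set.Icc (0:ℝ) ε, HasDerivAt y (F t (y t)) t := by
  set d : ℝ := 1 / (2 * (L + 1)) with hddef
  have hd0 : 0 < d := by positivity
  have key : ∀ k : ℕ, ∃ y : ℝ → E, y 0 = 0 ∧
      ∀ t ∈ Set.Icc (-d) ((k : ℝ) * d), HasDerivWithinAt y (F t (y t))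
        (Set.Icc (-d) ((k : ℝ) * d)) t := by
    intro k
    induction k with
    | zero =>
      have h0 : ((0 : ℕ) : ℝ) * d = 0 := by norm_num
      rw [h0]
      exact stmt18_pl_step hL hB₀ hlip hcont hB 0 0 (-d) 0 ⟨by linarith, le_refl 0⟩
        (by rw [← hddef]; simp [hd0.le])
    | succ k ih =>
      obtain ⟨y, hy0, hy⟩ := ih
      set c : ℝ := (k : ℝ) * d with hcdef
      have hc0 : 0 ≤ c := by positivity
      obtain ⟨z, hz0, hz⟩ := stmt18_pl_step hL hB₀ hlip hcont hB c (y c) c (c + d)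
        ⟨le_refl c, by linarith⟩ (by rw [← hddef]; simp [hd0.le])
      have hcast : ((k + 1 : ℕ) : ℝ) * d = c + d := by push_cast; ring
      rw [hcast]
      refine ⟨fun t => if t ≤ c then y t else z t, by simp [hc0, hy0], ?_⟩
      intro t ht
      have hunion : Set.Icc (-d) c ∪ Set.Icc c (c + d) = Set.Icc (-d) (c + d) :=
        Set.Icc_union_Icc_eq_Icc (by linarith) (by linarith)
      rcases lt_trichotomy t c with hlt | heq | hgt
      · -- t < c : locally equal to y
        have hmem : Set.Icc (-d) c ∈ nhdsWithin t (Set.Icc (-d) (c + d)) := by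
          rw [mem_nhdsWithin]
          exact ⟨Set.Iio c, isOpen_Iio, hlt, fun s hs => ⟨hs.2.1, hs.1.le⟩⟩
        have h1 := (hy t ⟨ht.1, hlt.le⟩).mono_of_mem_nhdsWithin hmem
        have h2 : (fun s => if s ≤ c then y s else z s) =ᶠ[nhdsWithin t (Set.Icc (-d) (c+d))]
            y := by
          filter_upwards [hmem] with s hs
          simp [hs.2]
        have h3 := h1.congr_of_eventuallyEq h2 (by simp [hlt.le])
        simpa [hlt.le] using h3
      · -- t = c : union of the two pieces
        have htc : t ≤ c := heq.le
        have hzt : z t = y t := by rw [heq, hz0]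
        have hA : HasDerivWithinAt (fun s => if s ≤ c then y s else z s) (F t (y t))
            (Set.Icc (-d) c) t :=
          (hy t ⟨ht.1, htc⟩).congr (fun s hs => by simp [hs.2]) (by simp [htc])
        have hB' : HasDerivWithinAt (fun s => if s ≤ c then y s else z s) (F t (y t))
            (Set.Icc c (c + d)) t := by
          have h0 := hz t ⟨heq.ge, by rw [heq]; linarith⟩
          rw [hzt] at h0
          refine h0.congr (fun s hs => ?_) (by simp [htc, hzt])
          rcases le_or_gt s c with hsc | hsc
          · have : s = c := le_antisymm hsc hs.1
            simp [this, hz0]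
          · simp [not_le.mpr hsc]
        have hU := hA.union hB'
        rw [hunion] at hU
        simpa [htc] using hU
      · -- t > c : locally equal to z
        have hmem : Set.Icc c (c + d) ∈ nhdsWithin t (Set.Icc (-d) (c + d)) := by
          rw [mem_nhdsWithin]
          exact ⟨Set.Ioi c, isOpen_Ioi, hgt, fun s hs => ⟨hs.1.le, hs.2.2⟩⟩
        have h1 := (hz t ⟨hgt.le, ht.2⟩).mono_of_mem_nhdsWithin hmem
        have h2 : (fun s => if s ≤ c then y s else z s) =ᶠ[nhdsWithin t (Set.Icc (-d) (c+d))]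
            z := by
          have hmem' : Set.Ioi c ∩ Set.Icc (-d) (c + d) ∈
              nhdsWithin t (Set.Icc (-d) (c + d)) := by
            rw [mem_nhdsWithin]
            exact ⟨Set.Ioi c, isOpen_Ioi, hgt, fun s hs => ⟨hs.1, hs.2⟩⟩
          filter_upwards [hmem'] with s hs
          simp [not_le.mpr (Set.mem_Ioi.mp hs.1)]
        have h3 := h1.congr_of_eventuallyEq h2 (by simp [not_le.mpr hgt])
        simpa [not_le.mpr hgt] using h3
  obtain ⟨k, hk⟩ := exists_nat_gt (ε / d)
  have hk' : ε < (k : ℝ) * d := by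
    rw [div_lt_iff₀ hd0] at hk; linarith
  obtain ⟨y, hy0, hy⟩ := key k
  refine ⟨y, hy0, fun t ht => ?_⟩
  have hmem : t ∈ Set.Icc (-d) ((k : ℝ) * d) := ⟨by linarith [ht.1], by linarith [ht.2]⟩
  exact (hy t hmem).hasDerivAt (Icc_mem_nhds (by linarith [ht.1]) (by linarith [ht.2]))

/-- The gauge construction of Lemma 3.3(b), at a fixed boundary point `x'`,
as a linear ODE system in the boundary normal coordinate `xⁿ ∈ [0, ε]`.
Indices run over `Fin (n+1)`, with `Fin.last n` playing the role of the index `n`.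
`f t i j` are the components of the tensor, `Γ t α i = Γ^α_{n i}(t)` are the
Christoffel symbols (with `Γ^k_{nn} = Γ^n_{kn} = 0` in these coordinates), and
`h t i = ∂ᵢvₙ(t)` is the tangential-derivative source term. -/
theorem stmt18 (n : ℕ) (ε : ℝ) (hε : 0 < ε)
    (f : ℝ → Fin (n + 1) → Fin (n + 1) → ℝ) (hf : Continuous f)
    (Γ : ℝ → Fin (n + 1) → Fin (n + 1) → ℝ) (hΓ : Continuous Γ)
    (hΓnn : ∀ t α, Γ t α (Fin.last n) = 0)
    (h : ℝ → Fin (n + 1) → ℝ) (hh : Continuous h) :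
    letI lst : Fin (n + 1) := Fin.last n
    letI P : (ℝ → Fin (n + 1) → ℝ) → Prop := fun v =>
      v 0 = 0 ∧
      (∀ t ∈ Set.Icc (0 : ℝ) ε,
        HasDerivAt (fun s => v s lst) (f t lst lst) t) ∧
      (∀ t ∈ Set.Icc (0 : ℝ) ε, ∀ i, i ≠ lst →
        HasDerivAt (fun s => v s i)
          (2 * (∑ α ∈ Finset.univ.erase lst, Γ t α i * v t α) + 2 * f t i lst - h t i) t)
    (∃ v, P v) ∧
    (∀ v w, P v → P w → ∀ t ∈ Set.Icc (0 : ℝ) ε, v t = w t) ∧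
    -- the gauge condition `(f - dv)_{i n} = 0`, where
    -- `(dv)_{i n} = (∂ₙvᵢ + ∂ᵢvₙ)/2 − Σ_α Γ^α_{n i} v_α`:
    (∀ v, P v → ∀ t ∈ Set.Icc (0 : ℝ) ε, ∀ i,
      f t i lst - ((deriv (fun s => v s i) t
          + (if i = lst then deriv (fun s => v s lst) t else h t i)) / 2
        - ∑ α ∈ Finset.univ.erase lst, Γ t α i * v t α) = 0) := by
  dsimp only
  set lst : Fin (n + 1) := Fin.last n with hlstdef
  -- the clamp map onto `[0, ε]`
  set π : ℝ → ℝ := fun t => min (max t 0) ε with hπdef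
  have hπmem : ∀ t, π t ∈ Set.Icc (0:ℝ) ε := fun t =>
    ⟨le_min (le_max_right _ _) hε.le, min_le_right _ _⟩
  have hπid : ∀ t ∈ Set.Icc (0:ℝ) ε, π t = t := fun t ht => by
    simp only [hπdef]
    rw [max_eq_left ht.1, min_eq_left ht.2]
  have hππ : ∀ t, π (π t) = π t := fun t => hπid _ (hπmem t)
  have hπcont : Continuous π := (continuous_id.max continuous_const).min continuous_const
  -- the vector field
  set F : ℝ → (Fin (n+1) → ℝ) → (Fin (n+1) → ℝ) := fun t y i =>
    if i = lst then f (π t) lst lst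
    else 2 * (∑ α ∈ Finset.univ.erase lst, Γ (π t) α i * y α) + 2 * f (π t) i lst - h (π t) i
    with hFdef
  -- bound on Γ
  obtain ⟨M₀, hM₀⟩ := (isCompact_Icc (a := (0:ℝ)) (b := ε)).exists_bound_of_continuousOn
    hΓ.continuousOn
  set M : ℝ := max M₀ 0 with hMdef
  have hM0 : 0 ≤ M := le_max_right _ _
  have hMb : ∀ t α i, |Γ (π t) α i| ≤ M := by
    intro t α i
    have h1 : ‖Γ (π t)‖ ≤ M₀ := hM₀ _ (hπmem t)
    have h2 : ‖Γ (π t) α‖ ≤ ‖Γ (π t)‖ := norm_le_pi_norm _ α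
    have h3 : ‖Γ (π t) α i‖ ≤ ‖Γ (π t) α‖ := norm_le_pi_norm _ i
    rw [Real.norm_eq_abs] at h3
    calc |Γ (π t) α i| ≤ ‖Γ (π t)‖ := h3.trans h2
      _ ≤ M₀ := h1
      _ ≤ M := le_max_left _ _
  set L : ℝ := 2 * (n + 1) * M with hLdef
  have hL : 0 ≤ L := by positivity
  have hLcoe : (L.toNNReal : ℝ) = L := Real.coe_toNNReal L hL
  -- Lipschitz bound
  have hlip : ∀ t, LipschitzWith L.toNNReal (F t) := by
    intro t
    apply LipschitzWith.of_dist_le_mul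
    intro y z
    rw [hLcoe, dist_pi_le_iff (by positivity)]
    intro i
    by_cases hi : i = lst
    · simp only [hFdef, hi, if_pos rfl, dist_self]
      positivity
    · simp only [hFdef, if_neg hi, Real.dist_eq]
      have hsub : (∑ α ∈ Finset.univ.erase lst, Γ (π t) α i * y α)
          - (∑ α ∈ Finset.univ.erase lst, Γ (π t) α i * z α)
          = ∑ α ∈ Finset.univ.erase lst, Γ (π t) α i * (y α - z α) := by
        rw [← Finset.sum_sub_distrib]
        exact Finset.sum_congr rfl fun a _ => by ring
      have hdiff : (2 * (∑ α ∈ Finset.univ.erase lst, Γ (π t) α i * y α)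
            + 2 * f (π t) i lst - h (π t) i)
          - (2 * (∑ α ∈ Finset.univ.erase lst, Γ (π t) α i * z α)
            + 2 * f (π t) i lst - h (π t) i)
          = 2 * ∑ α ∈ Finset.univ.erase lst, Γ (π t) α i * (y α - z α) := by
        rw [← hsub]; ring
      rw [hdiff, abs_mul, abs_two]
      have hterm : ∀ α ∈ Finset.univ.erase lst, |Γ (π t) α i * (y α - z α)| ≤ M * dist y z := by
        intro α _
        rw [abs_mul]
        have h1 : |y α - z α| ≤ dist y z := by
          rw [← Real.dist_eq]; exact dist_le_pi_dist y z α
        exact mul_le_mul (hMb t α i) h1 (abs_nonneg _) hM0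
      have hsum : |∑ α ∈ Finset.univ.erase lst, Γ (π t) α i * (y α - z α)|
          ≤ (Finset.univ.erase lst).card * (M * dist y z) := by
        calc |∑ α ∈ Finset.univ.erase lst, Γ (π t) α i * (y α - z α)|
            ≤ ∑ α ∈ Finset.univ.erase lst, |Γ (π t) α i * (y α - z α)| :=
              Finset.abs_sum_le_sum_abs _ _
          _ ≤ ∑ _α ∈ Finset.univ.erase lst, M * dist y z := Finset.sum_le_sum hterm
          _ = (Finset.univ.erase lst).card * (M * dist y z) := by
              rw [Finset.sum_const, nsmul_eq_mul]
      have hcard : ((Finset.univ.erase lst).card : ℝ) ≤ (n + 1 : ℝ) := by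
        have := Finset.card_le_card (Finset.erase_subset lst (Finset.univ : Finset (Fin (n+1))))
        have h2 : (Finset.univ : Finset (Fin (n+1))).card = n + 1 := by
          simp [Finset.card_univ]
        rw [h2] at this
        exact_mod_cast this
      have hd0 : (0:ℝ) ≤ dist y z := dist_nonneg
      calc (2:ℝ) * |∑ α ∈ Finset.univ.erase lst, Γ (π t) α i * (y α - z α)|
          ≤ 2 * ((Finset.univ.erase lst).card * (M * dist y z)) := by linarith
        _ ≤ 2 * ((n + 1 : ℝ) * (M * dist y z)) := by
            have := mul_le_mul_of_nonneg_right hcard (mul_nonneg hM0 hd0)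
            linarith
        _ = L * dist y z := by rw [hLdef]; ring
  -- continuity in time
  have hfc : ∀ (i j : Fin (n+1)), Continuous fun s => f s i j := fun i j =>
    (continuous_apply j).comp ((continuous_apply i).comp hf)
  have hΓc : ∀ (i j : Fin (n+1)), Continuous fun s => Γ s i j := fun i j =>
    (continuous_apply j).comp ((continuous_apply i).comp hΓ)
  have hhc : ∀ (i : Fin (n+1)), Continuous fun s => h s i := fun i =>
    (continuous_apply i).comp hh
  have hcont : ∀ x, Continuous fun t => F t x := by
    intro x
    apply continuous_pi
    intro i
    by_cases hi : i = lst
    · simp only [hFdef, hi, if_pos rfl]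
      exact (hfc lst lst).comp hπcont
    · simp only [hFdef, if_neg hi]
      refine Continuous.sub (Continuous.add ?_ ?_) ((hhc i).comp hπcont)
      · exact continuous_const.mul (continuous_finset_sum _ fun α _ =>
          ((hΓc α i).comp hπcont).mul continuous_const)
      · exact continuous_const.mul ((hfc i lst).comp hπcont)
  -- bound at 0
  obtain ⟨B₁, hB₁⟩ := (isCompact_Icc (a := (0:ℝ)) (b := ε)).exists_bound_of_continuousOn
    (hcont 0).continuousOn
  set B₀ : ℝ := max B₁ 0 with hB₀def
  have hB₀ : 0 ≤ B₀ := le_max_right _ _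
  have hB : ∀ t, ‖F t 0‖ ≤ B₀ := by
    intro t
    have h1 : F t 0 = F (π t) 0 := by
      funext i
      simp only [hFdef, hππ]
    rw [h1]
    exact le_trans (hB₁ _ (hπmem t)) (le_max_left _ _)
  -- key equivalence: solutions of P are exactly integral curves of F on [0, ε]
  have hFval : ∀ t ∈ Set.Icc (0:ℝ) ε, ∀ (y : Fin (n+1) → ℝ) i,
      F t y i = if i = lst then f t lst lst
        else 2 * (∑ α ∈ Finset.univ.erase lst, Γ t α i * y α) + 2 * f t i lst - h t i := by
    intro t ht y i
    simp only [hFdef, hπid t ht]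
  have hPderiv : ∀ v : ℝ → Fin (n+1) → ℝ,
      (∀ t ∈ Set.Icc (0 : ℝ) ε, HasDerivAt (fun s => v s lst) (f t lst lst) t) →
      (∀ t ∈ Set.Icc (0 : ℝ) ε, ∀ i, i ≠ lst →
        HasDerivAt (fun s => v s i)
          (2 * (∑ α ∈ Finset.univ.erase lst, Γ t α i * v t α) + 2 * f t i lst - h t i) t) →
      ∀ t ∈ Set.Icc (0:ℝ) ε, HasDerivAt v (F t (v t)) t := by
    intro v hvlst hvi t ht
    rw [hasDerivAt_pi]
    intro i
    rw [hFval t ht (v t) i]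
    by_cases hi : i = lst
    · rw [if_pos hi, hi]
      exact hvlst t ht
    · rw [if_neg hi]
      exact hvi t ht i hi
  refine ⟨?_, ?_, ?_⟩
  · -- existence
    obtain ⟨y, hy0, hy⟩ := stmt18_ode_global hL hB₀ hlip hcont hB ε hε
    refine ⟨y, hy0, ?_, ?_⟩
    · intro t ht
      have := hasDerivAt_pi.mp (hy t ht) lst
      rwa [hFval t ht (y t) lst, if_pos rfl] at this
    · intro t ht i hi
      have := hasDerivAt_pi.mp (hy t ht) i
      rwa [hFval t ht (y t) i, if_neg hi] at this
  · -- uniqueness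
    intro v w hv hw t ht
    obtain ⟨hv0, hvlst, hvi⟩ := hv
    obtain ⟨hw0, hwlst, hwi⟩ := hw
    have hvC : ContinuousOn v (Set.Icc 0 ε) := fun s hs =>
      ((hPderiv v hvlst hvi s hs).continuousAt).continuousWithinAt
    have hwC : ContinuousOn w (Set.Icc 0 ε) := fun s hs =>
      ((hPderiv w hwlst hwi s hs).continuousAt).continuousWithinAt
    have hkey := dist_le_of_trajectories_ODE (v := F) (K := L.toNNReal)
      (f := v) (g := w) (a := 0) (b := ε) (δ := 0) hlip hvC
      (fun s hs => (hPderiv v hvlst hvi s (Set.Ico_subset_Icc_self hs)).hasDerivWithinAt)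
      hwC
      (fun s hs => (hPderiv w hwlst hwi s (Set.Ico_subset_Icc_self hs)).hasDerivWithinAt)
      (by rw [hv0, hw0]; simp)
    have := hkey t ht
    rw [zero_mul] at this
    exact dist_le_zero.mp this
  · -- the gauge condition
    intro v hv t ht i
    obtain ⟨hv0, hvlst, hvi⟩ := hv
    by_cases hi : i = lst
    · rw [if_pos hi, hi]
      have hd : deriv (fun s => v s lst) t = f t lst lst := (hvlst t ht).deriv
      have hsum : ∑ α ∈ Finset.univ.erase lst, Γ t α lst * v t α = 0 :=
        Finset.sum_eq_zero fun α _ => by rw [hΓnn t α, zero_mul]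
      rw [hd, hsum]
      ring
    · rw [if_neg hi]
      have hd : deriv (fun s => v s i) t
          = 2 * (∑ α ∈ Finset.univ.erase lst, Γ t α i * v t α) + 2 * f t i lst - h t i :=
        (hvi t ht i hi).deriv
      rw [hd]
      ring
end

section
/- Let U ⊆ ℝⁿ be open and connected, and let v, w : U → ℝⁿ be C¹ vector fields with equal symmetric differentials, dv = dw on U, such that v = w on some nonempty open subset of U. Then v = w on all of U. -/
open Set

lemma apply_eq_sum_single {n : ℕ} (ξ : Fin n → ℝ) (L : (Fin n → ℝ) →L[ℝ] ℝ) :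
    L ξ = ∑ i, ξ i * L (Pi.single i 1) := by
  conv_lhs => rw [← Finset.univ_sum_single ξ]
  rw [map_sum]
  congr 1; ext i
  have h : Pi.single i (ξ i) = ξ i • (Pi.single i 1 : Fin n → ℝ) := by
    ext k; rcases eq_or_ne k i with rfl | hk <;> simp [Pi.single_apply, *]
  rw [h, map_smul]; simp

lemma seg_const {n : ℕ} {U : Set (Fin n → ℝ)} (hU : IsOpen U)
    {v w : (Fin n → ℝ) → (Fin n → ℝ)}
    (hv : ContDiffOn ℝ 1 v U) (hw : ContDiffOn ℝ 1 w U)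
    (hdvw : ∀ x ∈ U, ∀ i j : Fin n,
      fderiv ℝ (fun y => v y j) x (Pi.single i 1)
          + fderiv ℝ (fun y => v y i) x (Pi.single j 1)
        = fderiv ℝ (fun y => w y j) x (Pi.single i 1)
          + fderiv ℝ (fun y => w y i) x (Pi.single j 1))
    (x y : Fin n → ℝ) (hseg : segment ℝ x y ⊆ U) :
    ∑ j, (v y j - w y j) * (y j - x j) = ∑ j, (v x j - w x j) * (y j - x j) := by
  set γ : ℝ → (Fin n → ℝ) := fun t => x + t • (y - x) with hγ
  have hγmem : ∀ t ∈ Icc (0:ℝ) 1, γ t ∈ U := by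
    intro t ht
    apply hseg
    rw [segment_eq_image' ℝ x y]
    exact mem_image_of_mem _ ht
  have hγd : ∀ t : ℝ, HasDerivAt γ (y - x) t := fun t => by
    simpa [hγ] using ((hasDerivAt_id t).smul_const (y - x)).const_add x
  set g : ℝ → ℝ := fun t => ∑ j, (v (γ t) j - w (γ t) j) * (y j - x j) with hg
  -- derivative of g is zero at each point of Icc
  have key : ∀ t ∈ Icc (0:ℝ) 1, HasDerivAt g 0 t := by
    intro t ht
    have hzU : γ t ∈ U := hγmem t ht
    have hvz : DifferentiableAt ℝ v (γ t) :=
      (hv.differentiableOn one_ne_zero).differentiableAt (hU.mem_nhds hzU)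
    have hwz : DifferentiableAt ℝ w (γ t) :=
      (hw.differentiableOn one_ne_zero).differentiableAt (hU.mem_nhds hzU)
    have hvj : ∀ j : Fin n, DifferentiableAt ℝ (fun p => v p j) (γ t) := fun j =>
      ((ContinuousLinearMap.proj j : (Fin n → ℝ) →L[ℝ] ℝ).differentiableAt).comp _ hvz
    have hwj : ∀ j : Fin n, DifferentiableAt ℝ (fun p => w p j) (γ t) := fun j =>
      ((ContinuousLinearMap.proj j : (Fin n → ℝ) →L[ℝ] ℝ).differentiableAt).comp _ hwz
    set A : Fin n → Fin n → ℝ := fun i j => fderiv ℝ (fun p => v p j) (γ t) (Pi.single i 1)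
    set B : Fin n → Fin n → ℝ := fun i j => fderiv ℝ (fun p => w p j) (γ t) (Pi.single i 1)
    set c : Fin n → ℝ := fun i => y i - x i
    have hterm : ∀ j : Fin n, HasDerivAt (fun s => (v (γ s) j - w (γ s) j) * (y j - x j))
        ((∑ i, c i * A i j - ∑ i, c i * B i j) * c j) t := by
      intro j
      have h1 : HasDerivAt (fun s => v (γ s) j) (fderiv ℝ (fun p => v p j) (γ t) (y - x)) t :=
        (hvj j).hasFDerivAt.comp_hasDerivAt t (hγd t)
      have h2 : HasDerivAt (fun s => w (γ s) j) (fderiv ℝ (fun p => w p j) (γ t) (y - x)) t :=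
        (hwj j).hasFDerivAt.comp_hasDerivAt t (hγd t)
      have e1 : fderiv ℝ (fun p => v p j) (γ t) (y - x) = ∑ i, c i * A i j := by
        rw [apply_eq_sum_single (y - x)]; rfl
      have e2 : fderiv ℝ (fun p => w p j) (γ t) (y - x) = ∑ i, c i * B i j := by
        rw [apply_eq_sum_single (y - x)]; rfl
      rw [e1] at h1; rw [e2] at h2
      exact (h1.sub h2).mul_const _
    have hsum : HasDerivAt g (∑ j, (∑ i, c i * A i j - ∑ i, c i * B i j) * c j) t :=
      HasDerivAt.fun_sum (fun j _ => hterm j)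
    have hzero : (∑ j, (∑ i, c i * A i j - ∑ i, c i * B i j) * c j) = 0 := by
      have hsym : ∀ i j, A i j + A j i = B i j + B j i := fun i j => hdvw _ hzU i j
      set T : Fin n → Fin n → ℝ := fun i j => c i * c j * (A i j - B i j) with hT
      have expand : ∑ j, (∑ i, c i * A i j - ∑ i, c i * B i j) * c j = ∑ j, ∑ i, T i j := by
        refine Finset.sum_congr rfl fun j _ => ?_
        rw [← Finset.sum_sub_distrib, Finset.sum_mul]
        exact Finset.sum_congr rfl fun i _ => by simp only [hT]; ring
      rw [expand]
      have hswap : (∑ j, ∑ i, T i j) = ∑ j, ∑ i, T j i := Finset.sum_comm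
      have h2 : ∑ j, ∑ i, (T i j + T j i) = (∑ j, ∑ i, T i j) + (∑ j, ∑ i, T j i) := by
        simp [Finset.sum_add_distrib]
      have hz : ∀ j i : Fin n, T i j + T j i = 0 := by
        intro j i
        simp only [hT]
        linear_combination (c i * c j) * (hsym i j)
      have hfin : (∑ j, ∑ i, T i j) + (∑ j, ∑ i, T i j) = 0 := by
        nth_rewrite 2 [hswap]
        rw [← h2]; simp [hz]
      linarith
    rw [← hzero]; exact hsum
  have hcont : ContinuousOn g (Icc 0 1) := fun t ht =>
    ((key t ht).continuousAt).continuousWithinAt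
  have := constant_of_has_deriv_right_zero hcont
    (fun t ht => ((key t (Ico_subset_Icc_self ht)).hasDerivWithinAt))
  have h10 := this 1 (by norm_num)
  have : g 1 = g 0 := h10
  simpa [hg, hγ] using this

theorem stmt19 (n : ℕ) (U : Set (Fin n → ℝ)) (hU : IsOpen U) (hconn : IsConnected U)
    (v w : (Fin n → ℝ) → (Fin n → ℝ))
    (hv : ContDiffOn ℝ 1 v U) (hw : ContDiffOn ℝ 1 w U)
    (hdvw : ∀ x ∈ U, ∀ i j : Fin n,
      fderiv ℝ (fun y => v y j) x (Pi.single i 1)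
          + fderiv ℝ (fun y => v y i) x (Pi.single j 1)
        = fderiv ℝ (fun y => w y j) x (Pi.single i 1)
          + fderiv ℝ (fun y => w y i) x (Pi.single j 1))
    (V : Set (Fin n → ℝ)) (hV : IsOpen V) (hVne : V.Nonempty) (hVU : V ⊆ U)
    (heq : Set.EqOn v w V) :
    Set.EqOn v w U := by
  classical
  set W : Set (Fin n → ℝ) :=
    {p | ∃ ε > 0, Metric.ball p ε ⊆ U ∧ ∀ z ∈ Metric.ball p ε, v z = w z} with hWdef
  have hWopen : IsOpen W := by
    rw [Metric.isOpen_iff]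
    rintro p ⟨ε, hε, hbU, hbeq⟩
    refine ⟨ε / 2, by positivity, fun q hq => ?_⟩
    have hsub : Metric.ball q (ε / 2) ⊆ Metric.ball p ε := by
      intro a ha
      rw [Metric.mem_ball] at *
      calc dist a p ≤ dist a q + dist q p := dist_triangle _ _ _
        _ < ε / 2 + ε / 2 := by linarith
        _ = ε := by ring
    exact ⟨ε / 2, by positivity, hsub.trans hbU, fun z hz => hbeq z (hsub hz)⟩
  have hWU : W ⊆ U := by
    rintro p ⟨ε, hε, hbU, _⟩
    exact hbU (Metric.mem_ball_self hε)
  have hVW : V ⊆ W := by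
    intro p hp
    obtain ⟨ε, hε, hb⟩ := Metric.isOpen_iff.mp hV p hp
    exact ⟨ε, hε, hb.trans hVU, fun z hz => heq (hb hz)⟩
  have hkey : ∀ p ∈ U, p ∈ closure W → p ∈ W := by
    intro p hpU hpcl
    obtain ⟨ε', hε', hbU'⟩ := Metric.isOpen_iff.mp hU p hpU
    set ε := ε' / 2 with hεdef
    have hε : 0 < ε := by positivity
    have hbU : Metric.ball p (2 * ε) ⊆ U := by
      intro a ha; apply hbU'; rw [Metric.mem_ball] at *; linarith
    obtain ⟨q, hqW, hqd⟩ := Metric.mem_closure_iff.mp hpcl ε hε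
    obtain ⟨δ, hδ, hδU, hδeq⟩ := hqW
    set δ' := min δ ε with hδ'def
    have hδ' : 0 < δ' := lt_min hδ hε
    have hball : Metric.ball q δ' ⊆ Metric.ball p (2 * ε) := by
      intro a ha
      rw [Metric.mem_ball] at *
      have h1 : dist q p < ε := by rwa [dist_comm]
      calc dist a p ≤ dist a q + dist q p := dist_triangle _ _ _
        _ < δ' + ε := by linarith
        _ ≤ ε + ε := by have := min_le_right δ ε; linarith
        _ = 2 * ε := by ring
    have hzeq : ∀ z ∈ Metric.ball p ε, v z = w z := by
      intro z hz
      have hzball : z ∈ Metric.ball p (2 * ε) := by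
        rw [Metric.mem_ball] at *; linarith
      have h0 : ∀ a ∈ Metric.ball q δ', ∑ j, (v z j - w z j) * (z j - a j) = 0 := by
        intro a ha
        have hseg : segment ℝ a z ⊆ U :=
          ((convex_ball p (2 * ε)).segment_subset (hball ha) hzball).trans hbU
        have := seg_const hU hv hw hdvw a z hseg
        rw [this]
        have hva : v a = w a := hδeq a (by
          rw [Metric.mem_ball] at *
          exact lt_of_lt_of_le ha (min_le_left δ ε))
        apply Finset.sum_eq_zero
        intro j _
        rw [hva]; ring
      set d : Fin n → ℝ := fun j => v z j - w z j with hd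
      have hq0 : ∑ j, d j * (z j - q j) = 0 := h0 q (Metric.mem_ball_self hδ')
      set cc : ℝ := δ' / (2 * (‖d‖ + 1)) with hcc
      have hnd : (0:ℝ) ≤ ‖d‖ := norm_nonneg d
      have hccpos : 0 < cc := by positivity
      have hmem : q + cc • d ∈ Metric.ball q δ' := by
        rw [Metric.mem_ball, dist_eq_norm, add_sub_cancel_left, norm_smul,
          Real.norm_eq_abs, abs_of_pos hccpos, hcc]
        rw [div_mul_eq_mul_div, div_lt_iff₀ (by positivity)]
        nlinarith
      have h1 : ∑ j, d j * (z j - (q + cc • d) j) = 0 := h0 _ hmem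
      have h2 : ∑ j, d j * (z j - (q + cc • d) j)
          = ∑ j, d j * (z j - q j) - cc * ∑ j, d j ^ 2 := by
        rw [Finset.mul_sum, ← Finset.sum_sub_distrib]
        refine Finset.sum_congr rfl fun j _ => ?_
        simp only [Pi.add_apply, Pi.smul_apply, smul_eq_mul]
        ring
      have hsq : ∑ j, d j ^ 2 = 0 := by
        rw [h2, hq0] at h1
        have : cc * ∑ j, d j ^ 2 = 0 := by linarith
        exact (mul_eq_zero.mp this).resolve_left (ne_of_gt hccpos)
      have hdz : ∀ j, d j = 0 := by
        intro j
        have := (Finset.sum_eq_zero_iff_of_nonneg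
          (fun i _ => sq_nonneg (d i))).mp hsq j (Finset.mem_univ j)
        exact pow_eq_zero_iff (by norm_num) |>.mp this
      funext j
      have := hdz j
      simp only [hd] at this
      linarith
    exact ⟨ε, hε, (fun a ha => hbU (by rw [Metric.mem_ball] at *; linarith)), hzeq⟩
  -- connectedness argument
  have hUW : U ⊆ W := by
    by_contra hcon
    have hBopen : IsOpen (closure W)ᶜ := isOpen_compl_iff.mpr isClosed_closure
    have hcover : U ⊆ W ∪ (closure W)ᶜ := by
      intro p hp
      by_cases h : p ∈ closure W
      · exact Or.inl (hkey p hp h)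
      · exact Or.inr h
    have hWne : (U ∩ W).Nonempty := by
      obtain ⟨x, hx⟩ := hVne
      exact ⟨x, hVU hx, hVW hx⟩
    have hBne : (U ∩ (closure W)ᶜ).Nonempty := by
      rw [Set.not_subset] at hcon
      obtain ⟨x, hxU, hxW⟩ := hcon
      refine ⟨x, hxU, fun hcl => hxW (hkey x hxU hcl)⟩
    obtain ⟨x, _, hx1, hx2⟩ := hconn.isPreconnected W (closure W)ᶜ hWopen hBopen hcover hWne hBne
    exact hx2 (subset_closure hx1)
  intro x hx
  obtain ⟨ε, hε, _, hzz⟩ := hUW hx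
  exact hzz x (Metric.mem_ball_self hε)
end
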